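/- If Γ is a strongly connected digraph with dim(Γ) = |V(Γ)| − 2, then every arc of Γ is of type (1,1) or of type (1,2); that is, for every arc (x,y) of Γ one has ∂(y,x) ∈ {1, 2}. -/
import Mathlib


/-!  Common definitions for weak metric dimension of digraphs.

A digraph is modelled by a vertex type `V` together with an arc relation
`A : V → V → Prop` (simplicity is expressed by `Irreflexive A`). -/

/-- There is a directed walk of length `n` from `x` to `y`. -/
def walkLen {V : Type*} (A : V → V → Prop) : ℕ → V → V → Prop
  | 0 => fun x y => x = y
  | n + 1 => fun x y => ∃ z, A x z ∧ walkLen A n z y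

/-- `∂(x,y)`: the length of a shortest directed path from `x` to `y`. -/
noncomputable def ddist {V : Type*} (A : V → V → Prop) (x y : V) : ℕ :=
  sInf {n | walkLen A n x y}

/-- The two way distance `∂̃(x,y) = (∂(x,y), ∂(y,x))`. -/
noncomputable def twoDist {V : Type*} (A : V → V → Prop) (x y : V) : ℕ × ℕ :=
  (ddist A x y, ddist A y x)

/-- Strong connectivity: any vertex can be reached from any vertex by a directed walk. -/
def IsStronglyConnected {V : Type*} (A : V → V → Prop) : Prop :=
  ∀ x y : V, ∃ n, walkLen A n x y

/-- `S` is a weakly resolving set: distinct vertices have different tuples of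
two way distances from the vertices of `S`. -/
def IsWeaklyResolving {V : Type*} (A : V → V → Prop) (S : Set V) : Prop :=
  ∀ u v : V, (∀ w ∈ S, twoDist A w u = twoDist A w v) → u = v

/-- The weak metric dimension: minimum cardinality of a weakly resolving set. -/
noncomputable def wdim {V : Type*} [Fintype V] (A : V → V → Prop) : ℕ :=
  sInf {k | ∃ S : Finset V, S.card = k ∧ IsWeaklyResolving A ↑S}

/-- The diameter: the maximum of `∂(x,y)` over all ordered pairs of vertices. -/
noncomputable def diam {V : Type*} [Fintype V] (A : V → V → Prop) : ℕ :=
  sSup {m | ∃ x y : V, ddist A x y = m}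

/-- `f(n,d)`: the least positive integer `k` with `k + d^(2k) ≥ n`. -/
noncomputable def fnd (n d : ℕ) : ℕ :=
  sInf {k | 0 < k ∧ n ≤ k + d ^ (2 * k)}

/-- An isomorphism from `(V, A)` onto `(W, B)` exists. -/
def IsIsoTo {V W : Type*} (A : V → V → Prop) (B : W → W → Prop) : Prop :=
  ∃ e : V ≃ W, ∀ x y, A x y ↔ B (e x) (e y)

/-- The digraph of Example 2.3: vertices `v_1, …, v_n` are the elements
`0, …, n-1` of `Fin n` (so `v_i` is `i - 1`). -/
def egArc (n d : ℕ) : Fin n → Fin n → Prop := fun x y =>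
  (x.val = n - 1 ∧ y.val ≤ n - d) ∨
  (x.val ≤ n - d ∧ y.val = n - d + 1) ∨
  (n - d + 1 ≤ x.val ∧ x.val ≤ n - 2 ∧ y.val = x.val + 1)

/-- The `r`-th (0-based) coordinate of the tuple `v_{j+1}` in Construction 2.4;
it lies in `{1, …, d}` and `j = Σ_r (coord r - 1) d^r`. -/
def gcoord (d j r : ℕ) : ℕ := j / d ^ r % d + 1

/-- The arc relation of Construction 2.4, with the `u`-vertices `Fin k` on the left
and the `v`-vertices `Fin m` on the right of the sum. -/
def gammaArcKM (d k : ℕ) {m : ℕ} : Fin k ⊕ Fin m → Fin k ⊕ Fin m → Prop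
  | .inl _, .inl _ => False
  | .inl i, .inr j => gcoord d j.val (2 * i.val) = 1
  | .inr j, .inl i => gcoord d j.val (2 * i.val + 1) = 1
  | .inr j, .inr l => j ≠ l ∧ ∀ r < k,
      gcoord d l.val (2 * r) ≤ gcoord d j.val (2 * r) + 1 ∧
      gcoord d j.val (2 * r + 1) ≤ gcoord d l.val (2 * r + 1) + 1

/-- The arc relation of `Γ̄`: `Γ` of Construction 2.4 together with symmetric arcs
between any two distinct `u`-vertices. -/
def gammaBarArcKM (d k : ℕ) {m : ℕ} : Fin k ⊕ Fin m → Fin k ⊕ Fin m → Prop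
  | .inl i, .inl i' => i ≠ i'
  | x, y => gammaArcKM d k x y

/-- The directed cycle of length `m` on `Fin m`. -/
def cycArc (m : ℕ) [NeZero m] : Fin m → Fin m → Prop := fun x y => y = x + 1

/-- `σ` is an automorphism of the digraph `(V, A)`. -/
def IsDigraphAuto {V : Type*} (A : V → V → Prop) (σ : V ≃ V) : Prop :=
  ∀ a b, A a b ↔ A (σ a) (σ b)

/-- Vertex-transitivity. -/
def IsVertexTransitive {V : Type*} (A : V → V → Prop) : Prop :=
  ∀ x y : V, ∃ σ : V ≃ V, IsDigraphAuto A σ ∧ σ x = y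

/-- Weak distance-transitivity. -/
def IsWeaklyDistanceTransitive {V : Type*} (A : V → V → Prop) : Prop :=
  ∀ x y x' y' : V, twoDist A x y = twoDist A x' y' →
    ∃ σ : V ≃ V, IsDigraphAuto A σ ∧ σ x = x' ∧ σ y = y'

/-- Weak distance-regularity. -/
noncomputable def IsWeaklyDistanceRegular {V : Type*} (A : V → V → Prop) : Prop :=
  ∀ i j : ℕ × ℕ, (∃ a b : V, twoDist A a b = i) → (∃ a b : V, twoDist A a b = j) →
    ∀ x y x' y' : V, twoDist A x y = twoDist A x' y' →
      Set.ncard {z : V | twoDist A x z = i ∧ twoDist A z y = j} =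
      Set.ncard {z : V | twoDist A x' z = i ∧ twoDist A z y' = j}

/-- The complete digraph `K_t`. -/
def Krel (t : ℕ) : Fin t → Fin t → Prop := fun x y => x ≠ y

/-- The null digraph `K̄_t`. -/
def Nrel (t : ℕ) : Fin t → Fin t → Prop := fun _ _ => False

/-- The directed path `P_2` of length `1`. -/
def P2rel : Fin 2 → Fin 2 → Prop := fun x y => x = 0 ∧ y = 1

/-- The digraph `G_1` on `{0,1,2}` with arcs `(0,1),(1,2),(2,1),(2,0)`. -/
def G1rel : Fin 3 → Fin 3 → Prop := fun x y =>
  (x = 0 ∧ y = 1) ∨ (x = 1 ∧ y = 2) ∨ (x = 2 ∧ y = 1) ∨ (x = 2 ∧ y = 0)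

/-- The digraph `G_2` on `{0,1,2}` with arcs `(0,1),(1,0),(1,2),(2,1),(2,0)`. -/
def G2rel : Fin 3 → Fin 3 → Prop := fun x y =>
  (x = 0 ∧ y = 1) ∨ (x = 1 ∧ y = 0) ∨ (x = 1 ∧ y = 2) ∨ (x = 2 ∧ y = 1) ∨ (x = 2 ∧ y = 0)

/-- The generalized lexicographic product `G[H₀, H₁, H₂]` for a digraph `G` on `{0,1,2}`. -/
def glex3 {α β γ : Type*} (G : Fin 3 → Fin 3 → Prop)
    (H0 : α → α → Prop) (H1 : β → β → Prop) (H2 : γ → γ → Prop) :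
    α ⊕ β ⊕ γ → α ⊕ β ⊕ γ → Prop
  | .inl x, .inl y => H0 x y
  | .inl _, .inr (.inl _) => G 0 1
  | .inl _, .inr (.inr _) => G 0 2
  | .inr (.inl _), .inl _ => G 1 0
  | .inr (.inl x), .inr (.inl y) => H1 x y
  | .inr (.inl _), .inr (.inr _) => G 1 2
  | .inr (.inr _), .inl _ => G 2 0
  | .inr (.inr _), .inr (.inl _) => G 2 1
  | .inr (.inr x), .inr (.inr y) => H2 x y

/-- A clique in a digraph: the two way distance between any two distinct
vertices of `S` is `(1,1)`. -/
noncomputable def DClique {V : Type*} (A : V → V → Prop) (S : Set V) : Prop :=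
  ∀ u ∈ S, ∀ v ∈ S, u ≠ v → twoDist A u v = (1, 1)

/-- An independent set in a digraph: no arcs inside `R`. -/
def DIndependent {V : Type*} (A : V → V → Prop) (R : Set V) : Prop :=
  ∀ u ∈ R, ∀ v ∈ R, ¬ A u v

section Aux

variable {V : Type*} {A : V → V → Prop}

lemma walkLen_trans : ∀ (m n : ℕ) (x y z : V), walkLen A m x y → walkLen A n y z →
    walkLen A (m + n) x z := by
  intro m
  induction m with
  | zero => intro n x y z h1 h2; cases h1; simpa using h2
  | succ k ih =>
    rintro n x y z ⟨w, haw, hw⟩ h2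
    rw [show k + 1 + n = (k + n) + 1 by omega]
    exact ⟨w, haw, ih n w y z hw h2⟩

lemma ddist_le {n : ℕ} {x y : V} (h : walkLen A n x y) : ddist A x y ≤ n :=
  Nat.sInf_le h

lemma ddist_self (x : V) : ddist A x x = 0 :=
  Nat.le_zero.mp (Nat.sInf_le (show walkLen A 0 x x from rfl))

lemma walk_ddist (hsc : IsStronglyConnected A) (x y : V) :
    walkLen A (ddist A x y) x y := by
  obtain ⟨n, hn⟩ := hsc x y
  have hne : {n | walkLen A n x y}.Nonempty := ⟨n, hn⟩
  exact Nat.sInf_mem hne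

lemma ddist_eq_zero_iff (hsc : IsStronglyConnected A) {x y : V} :
    ddist A x y = 0 ↔ x = y := by
  constructor
  · intro h
    have := walk_ddist hsc x y
    rw [h] at this
    exact this
  · rintro rfl; exact ddist_self x

lemma ddist_triangle (hsc : IsStronglyConnected A) (x y z : V) :
    ddist A x z ≤ ddist A x y + ddist A y z :=
  ddist_le (walkLen_trans _ _ _ _ _ (walk_ddist hsc x y) (walk_ddist hsc y z))

end Aux

/-- Lemma 4.6. If `dim(Γ) = |V(Γ)| - 2`, then every arc of `Γ`
is of type `(1,1)` or `(1,2)`. -/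
theorem arc_type_of_dim_card_sub_two {V : Type*} [Fintype V] (A : V → V → Prop)
    (hirr : Irreflexive A) (hsc : IsStronglyConnected A)
    (hdim : wdim A = Fintype.card V - 2) :
    ∀ x y : V, A x y → ddist A y x = 1 ∨ ddist A y x = 2 := by
  classical
  intro x y hxy
  by_contra hcon
  push_neg at hcon
  obtain ⟨h1, h2⟩ := hcon
  have hyx : y ≠ x := fun h => hirr x (h ▸ hxy)
  have hxyne : x ≠ y := fun h => hyx h.symm
  have hwalk := walk_ddist hsc y x
  have hr0 : ddist A y x ≠ 0 := fun h => hyx ((ddist_eq_zero_iff hsc).mp h)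
  obtain ⟨r', hr'⟩ : ∃ r', ddist A y x = r' + 3 := ⟨ddist A y x - 3, by omega⟩
  rw [hr'] at hwalk
  obtain ⟨z1, ha1, hw1⟩ : ∃ z, A y z ∧ walkLen A (r' + 2) z x := hwalk
  have hw1' := hw1
  obtain ⟨z2, ha2, hw2⟩ : ∃ z, A z1 z ∧ walkLen A (r' + 1) z x := hw1'
  -- distance from x
  have hdxy : ddist A x y = 1 := by
    have hle : ddist A x y ≤ 1 := ddist_le (show walkLen A 1 x y from ⟨y, hxy, rfl⟩)
    have hne : ddist A x y ≠ 0 := fun h => hxyne ((ddist_eq_zero_iff hsc).mp h)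
    omega
  -- distances of path vertices
  have hyz1 : y ≠ z1 := by
    rintro rfl
    have := ddist_le hw1
    omega
  have hdyz1 : ddist A y z1 = 1 := by
    have hle : ddist A y z1 ≤ 1 := ddist_le (show walkLen A 1 y z1 from ⟨z1, ha1, rfl⟩)
    have hne : ddist A y z1 ≠ 0 := fun h => hyz1 ((ddist_eq_zero_iff hsc).mp h)
    omega
  have hdz1x : ddist A z1 x = r' + 2 := by
    have hle : ddist A z1 x ≤ r' + 2 := ddist_le hw1
    have htri := ddist_triangle hsc y z1 x
    omega
  have hdyz2 : ddist A y z2 = 2 := by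
    have hle : ddist A y z2 ≤ 2 :=
      ddist_le (show walkLen A 2 y z2 from ⟨z1, ha1, z2, ha2, rfl⟩)
    have hne0 : ddist A y z2 ≠ 0 := by
      intro h
      have : y = z2 := (ddist_eq_zero_iff hsc).mp h
      subst this
      have := ddist_le hw2
      omega
    have hne1 : ddist A y z2 ≠ 1 := by
      intro h
      have hw := walk_ddist hsc y z2
      rw [h] at hw
      have : walkLen A (1 + (r' + 1)) y x := walkLen_trans _ _ _ _ _ hw hw2
      have := ddist_le this
      omega
    omega
  have hdz2x : ddist A z2 x = r' + 1 := by
    have hle : ddist A z2 x ≤ r' + 1 := ddist_le hw2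
    have htri := ddist_triangle hsc y z2 x
    omega
  -- distinctness
  have hyz2 : y ≠ z2 := by
    rintro rfl; rw [ddist_self] at hdyz2; omega
  have hz12 : z1 ≠ z2 := by
    rintro rfl; rw [hdyz1] at hdyz2; omega
  have hxz1 : x ≠ z1 := by
    rintro rfl; rw [ddist_self] at hdz1x; omega
  have hxz2 : x ≠ z2 := by
    rintro rfl; rw [ddist_self] at hdz2x; omega
  -- the resolving set
  set T : Finset V := {y, z1, z2} with hT
  have hxT : x ∉ T := by
    simp only [hT, Finset.mem_insert, Finset.mem_singleton]
    push_neg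
    exact ⟨hxyne, hxz1, hxz2⟩
  have hTcard : T.card = 3 := by
    rw [hT]
    rw [Finset.card_insert_of_notMem (by simp [hyz1, hyz2]),
      Finset.card_insert_of_notMem (by simp [hz12]), Finset.card_singleton]
  set S : Finset V := Finset.univ \ T with hS
  have hScard : S.card = Fintype.card V - 3 := by
    rw [hS, Finset.card_sdiff_of_subset (Finset.subset_univ T), hTcard, Finset.card_univ]
  have hres : IsWeaklyResolving A ↑S := by
    intro u v huv
    by_contra hne
    have key : ∀ w, w ∉ T → twoDist A w u = twoDist A w v := by
      intro w hw
      exact huv w (by simp [hS, hw])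
    have memT : ∀ a : V, a ∉ T → (twoDist A a u = twoDist A a v) →
        (a = u → False) := by
      intro a ha heq hau
      subst hau
      have h0 : twoDist A a a = (0, 0) := by simp [twoDist, ddist_self]
      rw [h0] at heq
      have : ddist A a v = 0 := (Prod.mk.injEq _ _ _ _).mp heq.symm |>.1
      exact hne ((ddist_eq_zero_iff hsc).mp this)
    have hu : u ∈ T := by
      by_contra h
      exact memT u h (key u h) rfl
    have hv : v ∈ T := by
      by_contra h
      have heq := key v h
      have h0 : twoDist A v v = (0, 0) := by simp [twoDist, ddist_self]
      rw [h0] at heq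
      have : ddist A v u = 0 := (Prod.mk.injEq _ _ _ _).mp heq |>.1
      exact hne ((ddist_eq_zero_iff hsc).mp this).symm
    -- x distinguishes pairs in T
    have hx := key x hxT
    have hx2 : ddist A u x = ddist A v x := by
      have := congrArg Prod.snd hx
      simpa [twoDist] using this
    have hdT : ∀ a : V, a ∈ T → (a = y ∨ a = z1 ∨ a = z2) := by
      intro a ha
      simpa [hT, Finset.mem_insert, Finset.mem_singleton] using ha
    rcases hdT u hu with rfl | rfl | rfl <;> rcases hdT v hv with rfl | rfl | rfl <;>
      first
        | exact hne rfl
        | (simp only [hr', hdz1x, hdz2x] at hx2; omega)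
  have hle : wdim A ≤ Fintype.card V - 3 :=
    Nat.sInf_le ⟨S, hScard, hres⟩
  have hcard4 : 4 ≤ Fintype.card V := by
    have hsub : ({x, y, z1, z2} : Finset V).card = 4 := by
      rw [Finset.card_insert_of_notMem (by simp [hxyne, hxz1, hxz2]),
        Finset.card_insert_of_notMem (by simp [hyz1, hyz2]),
        Finset.card_insert_of_notMem (by simp [hz12]), Finset.card_singleton]
    calc 4 = ({x, y, z1, z2} : Finset V).card := hsub.symm
      _ ≤ Fintype.card V := Finset.card_le_univ _
  omega
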